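/- arXiv:1311.7492 — 2 statements merged into one kernel-verified Lean document; each statement's English description precedes it below -/
import Mathlib

section
/- For every integer p ≥ 2 and every integer n ≥ 1, the number of decreasing p-ary labeled trees on [n] equals ∏_{j=0}^{n−1} (1 + (p−1)j); equivalently, y(n,n) = ∏_{j=0}^{n−1} (1 + (p−1)j). -/
open scoped Classical

/-- A `p`-ary labeled forest: a finite set of vertices (labels, which are
natural numbers), where each non-root vertex has a parent together with a
slot position in `Fin p` (the `p` ordered, possibly empty, child positions),
each (parent, slot) pair is occupied by at most one child, and every vertex
reaches a root (a vertex with no parent) by iterating the parent map. -/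
structure PForest (p : ℕ) where
  verts : Finset ℕ
  par : ℕ → Option (ℕ × Fin p)
  par_eq_none_of_not_mem : ∀ v, v ∉ verts → par v = none
  par_mem : ∀ v ∈ verts, ∀ w s, par v = some (w, s) → w ∈ verts
  par_inj : ∀ u ∈ verts, ∀ v ∈ verts, ∀ w s,
      par u = some (w, s) → par v = some (w, s) → u = v
  reaches_root : ∀ v ∈ verts,
      ∃ k, par ((fun x => ((par x).map Prod.fst).getD x)^[k] v) = none

namespace PForest

variable {p : ℕ}

/-- One step from a vertex towards the root (identity on roots and
non-vertices). -/
def step (T : PForest p) (v : ℕ) : ℕ := ((T.par v).map Prod.fst).getD v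

/-- The roots of the forest: vertices with no parent. -/
def roots (T : PForest p) : Finset ℕ := T.verts.filter (fun v => T.par v = none)

/-- `v` belongs to the maximal decreasing subtree `MD(T)`: every edge on the
path from `v` up to its root goes from a smaller label (child) to a larger
label (parent). -/
def InMD (T : PForest p) (v : ℕ) : Prop :=
  v ∈ T.verts ∧ ∀ k w s, T.par (T.step^[k] v) = some (w, s) → T.step^[k] v < w

/-- The vertex set of the maximal decreasing subtree `MD(T)`. -/
noncomputable def mdSet (T : PForest p) : Finset ℕ :=
  T.verts.filter (fun v => T.InMD v)

/-- `T` is a `p`-ary labeled tree on `[n] = {1, …, n}`: its vertex set is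
`{1, …, n}` and it has exactly one root (and no root when `n = 0`, i.e. the
empty tree). -/
def IsTreeOn (T : PForest p) (n : ℕ) : Prop :=
  T.verts = Finset.Icc 1 n ∧ T.roots.card = min n 1

/-- `v` is a leaf of `T`: it has no children. -/
def IsLeaf (T : PForest p) (v : ℕ) : Prop := ∀ u s, T.par u ≠ some (v, s)

end PForest

/-- `t(n,k)`: the number of `p`-ary labeled trees on `[n]` whose maximal
decreasing subtree has exactly `k` vertices. -/
noncomputable def t (p n k : ℕ) : ℕ :=
  Nat.card {T : PForest p // T.IsTreeOn n ∧ T.mdSet.card = k}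

/-- `y(n,k)`: the number of `p`-ary labeled trees on `[n]` whose maximal
decreasing subtree has exactly `k` vertices and all of whose remaining
`n - k` vertices are (increasing) leaves; equivalently, trees obtained by
attaching `n - k` increasing leaves to a decreasing tree with `k` vertices. -/
noncomputable def y (p n k : ℕ) : ℕ :=
  Nat.card {T : PForest p // T.IsTreeOn n ∧ T.mdSet.card = k ∧
    ∀ v ∈ T.verts, ¬ T.InMD v → T.IsLeaf v}

/-- `f(n,k)`: the number of (unordered) forests on `[n]` consisting of `k`
`p`-ary labeled trees. -/
noncomputable def f (p n k : ℕ) : ℕ :=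
  Nat.card {T : PForest p // T.verts = Finset.Icc 1 n ∧ T.roots.card = k}

namespace Stmt3Aux

abbrev Slot (p : ℕ) := ℕ × Fin p

def Decrf {p : ℕ} (f : ℕ → Option (Slot p)) : Prop := ∀ v w s, f v = some (w, s) → v < w

def stepf {p : ℕ} (f : ℕ → Option (Slot p)) (x : ℕ) : ℕ := ((f x).map Prod.fst).getD x

lemma le_stepf {p : ℕ} {f : ℕ → Option (Slot p)} (hf : Decrf f) (u : ℕ) : u ≤ stepf f u := by
  unfold stepf
  cases h : f u with
  | none => simp
  | some ws => simpa using (hf u ws.1 ws.2 (by rw [h])).le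

lemma stepf_iter_agree {p : ℕ} {f f' : ℕ → Option (Slot p)} {a : ℕ}
    (h : ∀ v, v ≠ a → f' v = f v) (hf : Decrf f) {v : ℕ} (hv : a < v) (k : ℕ) :
    (stepf f')^[k] v = (stepf f)^[k] v ∧ a < (stepf f)^[k] v := by
  induction k with
  | zero => exact ⟨rfl, hv⟩
  | succ k ih =>
    rw [Function.iterate_succ_apply', Function.iterate_succ_apply', ih.1]
    set u := (stepf f)^[k] v with hu
    refine ⟨?_, lt_of_lt_of_le ih.2 (le_stepf hf _)⟩
    show stepf f' u = stepf f u
    unfold stepf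
    rw [h u ih.2.ne']

lemma pforest_ext {p : ℕ} {T1 T2 : PForest p} (hv : T1.verts = T2.verts)
    (hp : T1.par = T2.par) : T1 = T2 := by
  cases T1; cases T2; simp_all

def delPar {p : ℕ} (T : PForest p) (a : ℕ) : ℕ → Option (Slot p) :=
  fun v => if v = a then none else T.par v

def addPar {p : ℕ} (T : PForest p) (a : ℕ) (ws : Slot p) : ℕ → Option (Slot p) :=
  fun v => if v = a then some ws else T.par v

def del {p : ℕ} (T : PForest p) (a : ℕ) (hd : Decrf T.par)
    (hmin : ∀ v ∈ T.verts, a ≤ v) : PForest p where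
  verts := T.verts.erase a
  par := delPar T a
  par_eq_none_of_not_mem := by
    intro v hv
    unfold delPar
    by_cases h : v = a
    · simp [h]
    · simp only [h, if_false]
      exact T.par_eq_none_of_not_mem v (fun hm => hv (Finset.mem_erase.mpr ⟨h, hm⟩))
  par_mem := by
    intro v hv w s h
    rw [Finset.mem_erase] at hv
    unfold delPar at h
    simp only [hv.1, if_false] at h
    refine Finset.mem_erase.mpr ⟨?_, T.par_mem v hv.2 w s h⟩
    have h1 : v < w := hd v w s h
    have h2 : a ≤ v := hmin v hv.2
    omega
  par_inj := by
    intro u hu v hv w s h1 h2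
    rw [Finset.mem_erase] at hu hv
    unfold delPar at h1 h2
    simp only [hu.1, if_false] at h1
    simp only [hv.1, if_false] at h2
    exact T.par_inj u hu.2 v hv.2 w s h1 h2
  reaches_root := by
    intro v hv
    rw [Finset.mem_erase] at hv
    have hav : a < v := lt_of_le_of_ne (hmin v hv.2) (Ne.symm hv.1)
    obtain ⟨k, hk⟩ := T.reaches_root v hv.2
    have hk' : T.par ((stepf T.par)^[k] v) = none := hk
    have hag : ∀ u, u ≠ a → delPar T a u = T.par u := by
      intro u hu; simp [delPar, hu]
    have H := stepf_iter_agree hag hd hav k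
    refine ⟨k, ?_⟩
    show delPar T a ((stepf (delPar T a))^[k] v) = none
    rw [H.1, hag _ H.2.ne', hk']

def add {p : ℕ} (T : PForest p) (a : ℕ) (ws : Slot p)
    (hd : Decrf T.par) (hmin : ∀ v ∈ T.verts, a < v)
    (hw : ws.1 ∈ T.verts) (hfree : ∀ u, T.par u ≠ some ws) : PForest p where
  verts := insert a T.verts
  par := addPar T a ws
  par_eq_none_of_not_mem := by
    intro v hv
    rw [Finset.mem_insert] at hv
    push_neg at hv
    unfold addPar
    simp only [hv.1, if_false]
    exact T.par_eq_none_of_not_mem v hv.2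
  par_mem := by
    intro v hv w s h
    unfold addPar at h
    by_cases hva : v = a
    · rw [if_pos hva, Option.some.injEq] at h
      have : w = ws.1 := by rw [h]
      rw [this]
      exact Finset.mem_insert_of_mem hw
    · rw [if_neg hva] at h
      rw [Finset.mem_insert] at hv
      exact Finset.mem_insert_of_mem
        (T.par_mem v (hv.resolve_left hva) w s h)
  par_inj := by
    intro u hu v hv w s h1 h2
    unfold addPar at h1 h2
    rw [Finset.mem_insert] at hu hv
    by_cases hua : u = a <;> by_cases hva : v = a
    · rw [hua, hva]
    · rw [if_pos hua, Option.some.injEq] at h1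
      rw [if_neg hva] at h2
      exact absurd (h1 ▸ h2) (hfree v)
    · rw [if_pos hva, Option.some.injEq] at h2
      rw [if_neg hua] at h1
      exact absurd (h2 ▸ h1) (hfree u)
    · rw [if_neg hua] at h1
      rw [if_neg hva] at h2
      exact T.par_inj u (hu.resolve_left hua) v (hv.resolve_left hva) w s h1 h2
  reaches_root := by
    intro v hv
    have hag : ∀ u, u ≠ a → addPar T a ws u = T.par u := by
      intro u hu; simp [addPar, hu]
    rw [Finset.mem_insert] at hv
    rcases hv with hv | hv
    · have haw : a < ws.1 := hmin ws.1 hw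
      obtain ⟨k, hk⟩ := T.reaches_root ws.1 hw
      have hk' : T.par ((stepf T.par)^[k] ws.1) = none := hk
      have H := stepf_iter_agree hag hd haw k
      refine ⟨k + 1, ?_⟩
      show addPar T a ws ((stepf (addPar T a ws))^[k+1] v) = none
      have hs : stepf (addPar T a ws) v = ws.1 := by
        unfold stepf addPar
        rw [if_pos hv]
        rfl
      rw [Function.iterate_succ_apply, hs, H.1, hag _ H.2.ne', hk']
    · have hav : a < v := hmin v hv
      obtain ⟨k, hk⟩ := T.reaches_root v hv
      have hk' : T.par ((stepf T.par)^[k] v) = none := hk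
      have H := stepf_iter_agree hag hd hav k
      refine ⟨k, ?_⟩
      show addPar T a ws ((stepf (addPar T a ws))^[k] v) = none
      rw [H.1, hag _ H.2.ne', hk']

def DProp (p a n : ℕ) (T : PForest p) : Prop :=
  T.verts = Finset.Icc a n ∧ T.roots.card = 1 ∧ Decrf T.par

def DT (p a n : ℕ) := {T : PForest p // DProp p a n T}

lemma roots_eq {p a n : ℕ} {T : PForest p} (h : DProp p a n T) (han : a ≤ n) :
    T.roots = {n} := by
  have hnv : n ∈ T.verts := by rw [h.1]; exact Finset.mem_Icc.mpr ⟨han, le_rfl⟩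
  have hn : n ∈ T.roots := by
    rw [PForest.roots, Finset.mem_filter]
    refine ⟨hnv, ?_⟩
    cases hpar : T.par n with
    | none => rfl
    | some ws =>
      have h1 := h.2.2 n ws.1 ws.2 (by rw [hpar])
      have hwv : ws.1 ∈ T.verts := T.par_mem n hnv ws.1 ws.2 (by rw [hpar])
      rw [h.1, Finset.mem_Icc] at hwv
      omega
  obtain ⟨x, hx⟩ := Finset.card_eq_one.mp h.2.1
  rw [hx] at hn ⊢
  rw [Finset.mem_singleton] at hn
  rw [hn]

lemma par_min {p a n : ℕ} {T : PForest p} (h : DProp p a n T) (han : a < n) :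
    ∃ ws : Slot p, T.par a = some ws := by
  have haV : a ∈ T.verts := by rw [h.1]; exact Finset.mem_Icc.mpr ⟨le_rfl, le_of_lt han⟩
  cases hpar : T.par a with
  | some ws => exact ⟨ws, rfl⟩
  | none =>
    have hmem : a ∈ T.roots := Finset.mem_filter.mpr ⟨haV, hpar⟩
    rw [roots_eq h han.le, Finset.mem_singleton] at hmem
    omega

noncomputable def freeSlots {p : ℕ} (T : PForest p) : Finset (Slot p) :=
  (T.verts ×ˢ Finset.univ).filter (fun ws => ∀ u, T.par u ≠ some ws)

lemma occ_eq_image {p : ℕ} (T : PForest p) (hp : 1 ≤ p) :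
    (T.verts ×ˢ (Finset.univ : Finset (Fin p))).filter
        (fun ws => ¬ ∀ u, T.par u ≠ some ws)
      = (T.verts.filter (fun v => ¬ T.par v = none)).image
          (fun v => (T.par v).getD (0, ⟨0, hp⟩)) := by
  ext ws
  simp only [Finset.mem_filter, Finset.mem_image, Finset.mem_product, Finset.mem_univ, and_true]
  constructor
  · rintro ⟨hw, hocc⟩
    push_neg at hocc
    obtain ⟨u, hu⟩ := hocc
    have huv : u ∈ T.verts := by
      by_contra h
      rw [T.par_eq_none_of_not_mem u h] at hu
      cases hu
    exact ⟨u, ⟨huv, by simp [hu]⟩, by simp [hu]⟩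
  · rintro ⟨v, hv, hv3⟩
    cases hpar : T.par v with
    | none => exact absurd hpar hv.2
    | some ws' =>
      rw [hpar] at hv3
      simp only [Option.getD_some] at hv3
      subst hv3
      refine ⟨T.par_mem v hv.1 ws'.1 ws'.2 (by rw [hpar]), ?_⟩
      push_neg
      exact ⟨v, hpar⟩

lemma card_nonroot {p : ℕ} (T : PForest p) (hr : T.roots.card = 1) :
    (T.verts.filter (fun v => ¬ T.par v = none)).card = T.verts.card - 1 := by
  have key := Finset.card_filter_add_card_filter_not
    (s := T.verts) (p := fun v => T.par v = none)
  have hroots : (T.verts.filter (fun v => T.par v = none)).card = 1 := hr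
  omega

lemma freeSlots_card {p : ℕ} (T : PForest p) (hr : T.roots.card = 1) (hp : 1 ≤ p) :
    (freeSlots T).card = T.verts.card * p - (T.verts.card - 1) := by
  have key := Finset.card_filter_add_card_filter_not
    (s := T.verts ×ˢ (Finset.univ : Finset (Fin p)))
    (p := fun ws => ∀ u, T.par u ≠ some ws)
  have htot : (T.verts ×ˢ (Finset.univ : Finset (Fin p))).card = T.verts.card * p := by
    rw [Finset.card_product, Finset.card_univ, Fintype.card_fin]
  have hocc : ((T.verts ×ˢ (Finset.univ : Finset (Fin p))).filter
      (fun ws => ¬ ∀ u, T.par u ≠ some ws)).card = T.verts.card - 1 := by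
    rw [occ_eq_image T hp, Finset.card_image_of_injOn, card_nonroot T hr]
    intro v1 hv1 v2 hv2 heq
    rw [Finset.mem_coe, Finset.mem_filter] at hv1 hv2
    cases h1 : T.par v1 with
    | none => exact absurd h1 hv1.2
    | some w1 =>
      cases h2 : T.par v2 with
      | none => exact absurd h2 hv2.2
      | some w2 =>
        simp only [h1, h2, Option.getD_some] at heq
        subst heq
        exact T.par_inj v1 hv1.1 v2 hv2.1 w1.1 w1.2 (by rw [h1]) (by rw [h2])
  have : (freeSlots T).card + (T.verts.card - 1) = T.verts.card * p := by
    rw [← htot, ← hocc]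
    exact key
  omega

lemma arith (p m : ℕ) (hp : 1 ≤ p) (hm : 1 ≤ m) :
    m * p - (m - 1) = 1 + (p - 1) * m := by
  obtain ⟨q, rfl⟩ := Nat.exists_eq_add_of_le hp
  obtain ⟨l, rfl⟩ := Nat.exists_eq_add_of_le hm
  have h1 : (1 + l) * (1 + q) = (1 + q * (1 + l)) + l := by ring
  have h2 : 1 + l - 1 = l := by omega
  have h3 : 1 + q - 1 = q := by omega
  rw [h1, h2, h3, Nat.add_sub_cancel]

lemma roots_del {p : ℕ} (T : PForest p) (a : ℕ) (hd : Decrf T.par)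
    (hmin : ∀ v ∈ T.verts, a ≤ v) :
    (del T a hd hmin).roots = T.roots.erase a := by
  ext v
  show v ∈ (T.verts.erase a).filter (fun v => delPar T a v = none) ↔ _
  rw [Finset.mem_filter]
  simp only [Finset.mem_filter, Finset.mem_erase, delPar, PForest.roots]
  by_cases hva : v = a
  · simp [hva]
  · simp only [hva, if_false]
    tauto

lemma roots_add {p : ℕ} (T : PForest p) (a : ℕ) (ws : Slot p)
    (hd : Decrf T.par) (hmin : ∀ v ∈ T.verts, a < v)
    (hw : ws.1 ∈ T.verts) (hfree : ∀ u, T.par u ≠ some ws) (ha : a ∉ T.verts) :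
    (add T a ws hd hmin hw hfree).roots = T.roots := by
  ext v
  show v ∈ (insert a T.verts).filter (fun v => addPar T a ws v = none) ↔ _
  rw [Finset.mem_filter]
  simp only [Finset.mem_filter, Finset.mem_insert, addPar, PForest.roots]
  by_cases hva : v = a
  · subst hva
    simp [ha]
  · simp only [hva, if_false, false_or]

lemma decrf_delPar {p : ℕ} (T : PForest p) (a : ℕ) (hd : Decrf T.par) :
    Decrf (delPar T a) := by
  intro v w s h
  unfold delPar at h
  by_cases hva : v = a
  · rw [if_pos hva] at h; cases h
  · rw [if_neg hva] at h; exact hd v w s h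

noncomputable def fwd {p a n : ℕ} (han : a < n) (T : DT p a n) :
    {x : DT p (a+1) n × Slot p // x.2 ∈ freeSlots x.1.1} := by
  have hd : Decrf T.1.par := T.2.2.2
  have hmin : ∀ v ∈ T.1.verts, a ≤ v := by
    intro v hv; rw [T.2.1, Finset.mem_Icc] at hv; exact hv.1
  have hsome : (T.1.par a).isSome := by
    obtain ⟨ws, hws⟩ := par_min T.2 han
    rw [hws]; rfl
  refine ⟨⟨⟨del T.1 a hd hmin, ?_, ?_, decrf_delPar T.1 a hd⟩, (T.1.par a).get hsome⟩, ?_⟩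
  · show T.1.verts.erase a = Finset.Icc (a+1) n
    rw [T.2.1, Finset.Icc_erase_left, Finset.Icc_add_one_left_eq_Ioc]
  · rw [roots_del, roots_eq T.2 han.le,
      Finset.erase_eq_of_notMem (by simp; omega), Finset.card_singleton]
  · -- slot membership in freeSlots of the deleted forest
    have hws : T.1.par a = some ((T.1.par a).get hsome) := (Option.some_get hsome).symm
    have haV : a ∈ T.1.verts := by
      rw [T.2.1]; exact Finset.mem_Icc.mpr ⟨le_rfl, han.le⟩
    have hws' : T.1.par a
        = some (((T.1.par a).get hsome).1, ((T.1.par a).get hsome).2) := hws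
    have hwV : ((T.1.par a).get hsome).1 ∈ T.1.verts :=
      T.1.par_mem a haV ((T.1.par a).get hsome).1 ((T.1.par a).get hsome).2 hws'
    have haw : a < ((T.1.par a).get hsome).1 :=
      hd a ((T.1.par a).get hsome).1 ((T.1.par a).get hsome).2 hws'
    rw [freeSlots, Finset.mem_filter]
    constructor
    · show _ ∈ (T.1.verts.erase a) ×ˢ Finset.univ
      rw [Finset.mem_product]
      exact ⟨Finset.mem_erase.mpr ⟨haw.ne', hwV⟩, Finset.mem_univ _⟩
    · intro u hu
      show False
      have hu' : delPar T.1 a u = some ((T.1.par a).get hsome) := hu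
      unfold delPar at hu'
      by_cases hua : u = a
      · rw [if_pos hua] at hu'; cases hu'
      · rw [if_neg hua] at hu'
        have huV : u ∈ T.1.verts := by
          by_contra h
          rw [T.1.par_eq_none_of_not_mem u h] at hu'
          cases hu'
        have hu'' : T.1.par u
            = some (((T.1.par a).get hsome).1, ((T.1.par a).get hsome).2) := hu'
        exact hua (T.1.par_inj u huV a haV _ _ hu'' hws')

lemma bwd_hmin {p a n : ℕ}
    (x : {x : DT p (a+1) n × Slot p // x.2 ∈ freeSlots x.1.1}) :
    ∀ v ∈ x.1.1.1.verts, a < v := by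
  intro v hv; rw [x.1.1.2.1, Finset.mem_Icc] at hv; omega

lemma bwd_hw {p a n : ℕ}
    (x : {x : DT p (a+1) n × Slot p // x.2 ∈ freeSlots x.1.1}) :
    x.1.2.1 ∈ x.1.1.1.verts := by
  have h := x.2
  rw [freeSlots, Finset.mem_filter, Finset.mem_product] at h
  exact h.1.1

lemma bwd_hfree {p a n : ℕ}
    (x : {x : DT p (a+1) n × Slot p // x.2 ∈ freeSlots x.1.1}) :
    ∀ u, x.1.1.1.par u ≠ some x.1.2 := by
  have h := x.2
  rw [freeSlots, Finset.mem_filter] at h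
  exact h.2

lemma bwd_haT {p a n : ℕ}
    (x : {x : DT p (a+1) n × Slot p // x.2 ∈ freeSlots x.1.1}) :
    a ∉ x.1.1.1.verts := by
  rw [x.1.1.2.1, Finset.mem_Icc]; omega

noncomputable def bwd {p a n : ℕ} (han : a < n)
    (x : {x : DT p (a+1) n × Slot p // x.2 ∈ freeSlots x.1.1}) : DT p a n :=
  ⟨add x.1.1.1 a x.1.2 x.1.1.2.2.2 (bwd_hmin x) (bwd_hw x) (bwd_hfree x), by
    refine ⟨?_, ?_, ?_⟩
    · show insert a x.1.1.1.verts = Finset.Icc a n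
      rw [x.1.1.2.1, Finset.Icc_add_one_left_eq_Ioc, Finset.Ioc_insert_left han.le]
    · rw [roots_add x.1.1.1 a x.1.2 x.1.1.2.2.2 (bwd_hmin x) (bwd_hw x) (bwd_hfree x)
        (bwd_haT x), x.1.1.2.2.1]
    · have hDec : Decrf (addPar x.1.1.1 a x.1.2) := by
        intro v w s h
        unfold addPar at h
        by_cases hva : v = a
        · rw [if_pos hva, Option.some.injEq] at h
          have hw1 : w = x.1.2.1 := by rw [h]
          have h2 := bwd_hmin x x.1.2.1 (bwd_hw x)
          omega
        · rw [if_neg hva] at h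
          exact x.1.1.2.2.2 v w s h
      exact hDec⟩

noncomputable def delEquiv {p a n : ℕ} (han : a < n) :
    DT p a n ≃ {x : DT p (a+1) n × Slot p // x.2 ∈ freeSlots x.1.1} where
  toFun := fwd han
  invFun := bwd han
  left_inv := by
    intro T
    apply Subtype.ext
    apply pforest_ext
    · show insert a (T.1.verts.erase a) = T.1.verts
      apply Finset.insert_erase
      rw [T.2.1]; exact Finset.mem_Icc.mpr ⟨le_rfl, han.le⟩
    · funext v
      show addPar _ a _ v = T.1.par v
      unfold addPar
      by_cases hva : v = a
      · rw [if_pos hva, hva]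
        exact Option.some_get _
      · rw [if_neg hva]
        show delPar T.1 a v = T.1.par v
        unfold delPar
        rw [if_neg hva]
  right_inv := by
    intro x
    apply Subtype.ext
    rw [Prod.ext_iff]
    constructor
    · apply Subtype.ext
      apply pforest_ext
      · show (insert a x.1.1.1.verts).erase a = x.1.1.1.verts
        exact Finset.erase_insert (bwd_haT x)
      · funext v
        show delPar _ a v = x.1.1.1.par v
        unfold delPar
        by_cases hva : v = a
        · rw [if_pos hva, hva]
          exact (x.1.1.1.par_eq_none_of_not_mem a (bwd_haT x)).symm
        · rw [if_neg hva]
          show addPar x.1.1.1 a x.1.2 v = x.1.1.1.par v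
          unfold addPar
          rw [if_neg hva]
    · show Option.get _ _ = x.1.2
      apply Option.some_injective
      rw [Option.some_get]
      show addPar x.1.1.1 a x.1.2 a = some x.1.2
      unfold addPar
      rw [if_pos rfl]

def prodSub {α : Type*} {β : Type*} (P : α → β → Prop) :
    {x : α × β // P x.1 x.2} ≃ Σ a : α, {b : β // P a b} where
  toFun x := ⟨x.1.1, x.1.2, x.2⟩
  invFun x := ⟨(x.1, x.2.1), x.2.2⟩
  left_inv x := rfl
  right_inv x := rfl

lemma Dcard_rec {p a n : ℕ} (hp : 1 ≤ p) (han : a < n) :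
    Nat.card (DT p a n) = Nat.card (DT p (a+1) n) * (1 + (p-1)*(n-a)) := by
  have hcard : ∀ T : DT p (a+1) n,
      Fintype.card {ws : Slot p // ws ∈ freeSlots T.1} = 1 + (p-1)*(n-a) := by
    intro T
    rw [Fintype.card_coe, freeSlots_card T.1 T.2.2.1 hp]
    have hm : T.1.verts.card = n - a := by rw [T.2.1, Nat.card_Icc]; omega
    rw [hm, arith p (n-a) hp (by omega)]
  have e : DT p a n ≃ DT p (a+1) n × Fin (1 + (p-1)*(n-a)) :=
    ((delEquiv han).trans
      (prodSub (fun (T : DT p (a+1) n) (ws : Slot p) => ws ∈ freeSlots T.1))).trans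
      ((Equiv.sigmaCongrRight (fun T => Fintype.equivFinOfCardEq (hcard T))).trans
        (Equiv.sigmaEquivProd _ _))
  rw [Nat.card_congr e, Nat.card_prod]
  congr 1
  simp

lemma Dcard_base (p n : ℕ) : Nat.card (DT p n n) = 1 := by
  have hT0 : DProp p n n
      { verts := Finset.Icc n n
        par := fun _ => none
        par_eq_none_of_not_mem := fun _ _ => rfl
        par_mem := by intro v _ w s h; cases h
        par_inj := by intro u _ v _ w s h _; cases h
        reaches_root := fun v _ => ⟨0, rfl⟩ } := by
    refine ⟨rfl, ?_, ?_⟩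
    · show ((Finset.Icc n n).filter (fun _ => (none : Option (Slot p)) = none)).card = 1
      rw [Finset.filter_true_of_mem (fun _ _ => rfl), Nat.card_Icc]
      omega
    · intro v w s h; cases h
  have huniq : ∀ T : DT p n n, T = ⟨_, hT0⟩ := by
    intro T
    apply Subtype.ext
    apply pforest_ext
    · rw [T.2.1]
    · funext v
      show T.1.par v = none
      by_cases hv : v ∈ T.1.verts
      · have hvn : v = n := by
          rw [T.2.1, Finset.mem_Icc] at hv; omega
        subst hvn
        have hr := roots_eq T.2 le_rfl
        have hmem : v ∈ T.1.roots := by rw [hr]; exact Finset.mem_singleton_self v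
        exact (Finset.mem_filter.mp hmem).2
      · exact T.1.par_eq_none_of_not_mem v hv
  haveI : Unique (DT p n n) := { default := ⟨_, hT0⟩, uniq := huniq }
  exact Nat.card_unique

lemma Dcard_prod (p : ℕ) (hp : 1 ≤ p) :
    ∀ d a n : ℕ, a + d = n →
      Nat.card (DT p a n) = ∏ j ∈ Finset.range (d+1), (1 + (p-1)*j) := by
  intro d
  induction d with
  | zero =>
    intro a n h
    have hn : a = n := by omega
    subst hn
    rw [Dcard_base]
    simp
  | succ d ih =>
    intro a n h
    have han : a < n := by omega
    rw [Dcard_rec hp han, ih (a+1) n (by omega)]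
    conv_rhs => rw [Finset.prod_range_succ]
    have hna : n - a = d + 1 := by omega
    rw [hna]

end Stmt3Aux

/-- The number of decreasing `p`-ary labeled trees on `[n]` equals
`∏_{j=0}^{n-1} (1 + (p-1)j)`; equivalently `y(n,n)` equals this product. -/
theorem stmt3 (p n : ℕ) (hp : 2 ≤ p) (hn : 1 ≤ n) :
    Nat.card {T : PForest p // T.IsTreeOn n ∧ ∀ v w s, T.par v = some (w, s) → v < w}
        = ∏ j ∈ Finset.range n, (1 + (p - 1) * j) ∧
    y p n n = ∏ j ∈ Finset.range n, (1 + (p - 1) * j) := by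
  have hp1 : 1 ≤ p := by omega
  have key : Nat.card (Stmt3Aux.DT p 1 n) = ∏ j ∈ Finset.range n, (1 + (p - 1) * j) := by
    have h := Stmt3Aux.Dcard_prod p hp1 (n-1) 1 n (by omega)
    rwa [show n - 1 + 1 = n from by omega] at h
  have hmin1 : min n 1 = 1 := min_eq_right hn
  constructor
  · rw [← key]
    unfold Stmt3Aux.DT
    apply Nat.card_congr
    apply Equiv.subtypeEquivRight
    intro T
    unfold PForest.IsTreeOn Stmt3Aux.DProp Stmt3Aux.Decrf
    rw [hmin1]
    tauto
  · rw [← key]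
    unfold y Stmt3Aux.DT
    apply Nat.card_congr
    apply Equiv.subtypeEquivRight
    intro T
    constructor
    · rintro ⟨hT, hcard, _⟩
      refine ⟨hT.1, by rw [hT.2, hmin1], ?_⟩
      have hvc : T.verts.card = n := by rw [hT.1, Nat.card_Icc]; omega
      have hmd : T.mdSet = T.verts :=
        Finset.eq_of_subset_of_card_le (Finset.filter_subset _ _)
          (le_of_eq (by rw [hvc, hcard]))
      intro v w s hvs
      have hv : v ∈ T.verts := by
        by_contra h
        rw [T.par_eq_none_of_not_mem v h] at hvs
        cases hvs
      have hv' : v ∈ T.mdSet := by rw [hmd]; exact hv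
      have hin : T.InMD v := by
        unfold PForest.mdSet at hv'
        exact (Finset.mem_filter.mp hv').2
      have h0 := hin.2 0 w s (by simpa using hvs)
      simpa using h0
    · rintro ⟨hV, hroots, hdec⟩
      refine ⟨⟨hV, by rw [hmin1, hroots]⟩, ?_, ?_⟩
      · have hmd : T.mdSet = T.verts := by
          unfold PForest.mdSet
          apply Finset.filter_true_of_mem
          intro v hv
          exact ⟨hv, fun k w s h => hdec _ w s h⟩
        rw [hmd, hV, Nat.card_Icc]
        omega
      · intro v hv hnot
        exact absurd ⟨hv, fun k w s h => hdec _ w s h⟩ hnot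
end

section
/- For every integer p ≥ 2 and all integers n ≥ 2, the number of trees Y in Y^(p)_{n,k} in which the vertex labeled 1 is a leaf equals ((k−1)p − n + 2) · y(n−1, k−1), for 1 ≤ k < n. -/
open scoped Classical

namespace PForest

variable {p : ℕ}

theorem pext {T U : PForest p} (hv : T.verts = U.verts) (hpar : T.par = U.par) : T = U := by
  cases T; cases U; simp_all

lemma step_eq_of_par {T : PForest p} {v w : ℕ} {s : Fin p} (h : T.par v = some (w, s)) :
    T.step v = w := by simp [step, h]

lemma step_eq_self {T : PForest p} {v : ℕ} (h : T.par v = none) : T.step v = v := by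
  simp [step, h]

lemma step_mem {T : PForest p} {v : ℕ} (hv : v ∈ T.verts) : T.step v ∈ T.verts := by
  rcases h : T.par v with _ | ⟨w, s⟩
  · rw [step_eq_self h]; exact hv
  · rw [step_eq_of_par h]; exact T.par_mem v hv w s h

lemma step_iterate_mem {T : PForest p} {v : ℕ} (hv : v ∈ T.verts) (k : ℕ) :
    T.step^[k] v ∈ T.verts := by
  induction k with
  | zero => exact hv
  | succ k ih => rw [Function.iterate_succ_apply']; exact step_mem ih

lemma reaches_root' (T : PForest p) {v : ℕ} (hv : v ∈ T.verts) :
    ∃ k, T.par (T.step^[k] v) = none := T.reaches_root v hv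

lemma inMD_step {T : PForest p} {v : ℕ} (h : T.InMD v) : T.InMD (T.step v) := by
  refine ⟨step_mem h.1, fun k w s hk => ?_⟩
  have := h.2 (k + 1) w s
  rw [Function.iterate_succ_apply] at this
  exact this hk

lemma inMD_of_par {T : PForest p} {v w : ℕ} {s : Fin p} (hv : v ∈ T.verts)
    (hpar : T.par v = some (w, s)) (hlt : v < w) (hw : T.InMD w) : T.InMD v := by
  refine ⟨hv, fun k u t hk => ?_⟩
  cases k with
  | zero =>
    simp only [Function.iterate_zero, id_eq] at hk ⊢
    rw [hpar] at hk; cases hk; exact hlt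
  | succ k =>
    rw [Function.iterate_succ_apply, step_eq_of_par hpar] at hk ⊢
    exact hw.2 k u t hk

/-- never a parent: iterates of step starting off 1 never hit a leaf -/
lemma step_iterate_ne_of_leaf {T : PForest p} {a v : ℕ} (hleaf : T.IsLeaf a)
    (hv : v ≠ a) (k : ℕ) : T.step^[k] v ≠ a := by
  induction k with
  | zero => exact hv
  | succ k ih =>
    rw [Function.iterate_succ_apply']
    intro h
    rcases hpar : T.par (T.step^[k] v) with _ | ⟨w, s⟩
    · rw [step_eq_self hpar] at h; exact ih h
    · rw [step_eq_of_par hpar] at h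
      subst h
      exact hleaf _ s hpar

/-- parent of a vertex with a child is in MD, given the leaf condition -/
lemma parent_inMD {T : PForest p} (H : ∀ v ∈ T.verts, ¬ T.InMD v → T.IsLeaf v)
    {u w : ℕ} {s : Fin p} (hu : u ∈ T.verts) (h : T.par u = some (w, s)) : T.InMD w := by
  by_contra hw
  have hwv : w ∈ T.verts := T.par_mem u hu w s h
  exact H w hwv hw u s h

/-- 1 is not a root in a tree with ≥ 2 vertices in which 1 is a leaf -/
lemma one_not_root {T : PForest p} {n : ℕ} (hT : T.IsTreeOn n) (hn : 2 ≤ n)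
    (hleaf : T.IsLeaf 1) : T.par 1 ≠ none := by
  intro h1
  have h1v : (1 : ℕ) ∈ T.verts := by rw [hT.1]; simp; omega
  have h2v : (2 : ℕ) ∈ T.verts := by rw [hT.1]; simp; omega
  have h1r : (1 : ℕ) ∈ T.roots := by simp [roots, h1v, h1]
  have hcard : T.roots.card = 1 := by rw [hT.2]; omega
  obtain ⟨r, hr⟩ := Finset.card_eq_one.mp hcard
  obtain ⟨k, hk⟩ := reaches_root' T h2v
  have h2r : T.step^[k] 2 ∈ T.roots := by
    simp [roots, step_iterate_mem h2v k, hk]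
  rw [hr] at h1r h2r
  simp at h1r h2r
  exact step_iterate_ne_of_leaf hleaf (by norm_num) k (h2r.trans h1r.symm)

lemma one_inMD {T : PForest p} {n : ℕ} (hT : T.IsTreeOn n) (hn : 2 ≤ n)
    (H : ∀ v ∈ T.verts, ¬ T.InMD v → T.IsLeaf v) (hleaf : T.IsLeaf 1) : T.InMD 1 := by
  have h1v : (1 : ℕ) ∈ T.verts := by rw [hT.1]; simp; omega
  rcases hpar : T.par 1 with _ | ⟨w, s⟩
  · exact absurd hpar (one_not_root hT hn hleaf)
  · have hw : T.InMD w := parent_inMD H h1v hpar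
    have hwv : w ∈ T.verts := T.par_mem 1 h1v w s hpar
    have hw1 : w ≠ 1 := fun h => hleaf 1 s (h ▸ hpar)
    have : 1 ≤ w := by rw [hT.1] at hwv; simp at hwv; omega
    exact inMD_of_par h1v hpar (by omega) hw


variable (hp : 0 < p)

/-- free slots on MD vertices -/
noncomputable def FS (T : PForest p) : Finset (ℕ × Fin p) :=
  (T.mdSet ×ˢ (Finset.univ : Finset (Fin p))).filter
    (fun q => ∀ u ∈ T.verts, T.par u ≠ some q)

lemma FS_card {T : PForest p} {n k : ℕ} (hp : 0 < p) (hT : T.IsTreeOn n)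
    (hmd : T.mdSet.card = k) (H : ∀ v ∈ T.verts, ¬ T.InMD v → T.IsLeaf v)
    (hn : 1 ≤ n) : T.FS.card = k * p - (n - 1) ∧ n - 1 ≤ k * p := by
  classical
  set d : ℕ × Fin p := (0, ⟨0, hp⟩) with hd
  set pp : ℕ → ℕ × Fin p := fun u => (T.par u).getD d with hpp
  set nonroots : Finset ℕ := T.verts.filter (fun u => T.par u ≠ none) with hnr
  have hocc : (T.mdSet ×ˢ (Finset.univ : Finset (Fin p))).filter
      (fun q => ¬ ∀ u ∈ T.verts, T.par u ≠ some q) = nonroots.image pp := by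
    ext q
    simp only [Finset.mem_filter, Finset.mem_image, Finset.mem_product, hnr, not_forall]
    constructor
    · rintro ⟨-, u, hu, hq⟩
      simp only [not_not] at hq
      exact ⟨u, ⟨hu, by simp [hq]⟩, by simp [hpp, hq]⟩
    · rintro ⟨u, hu, hq⟩
      rcases hpar : T.par u with _ | ⟨w, s⟩
      · exact absurd hpar hu.2
      · have hqe : q = (w, s) := by rw [← hq]; simp [hpp, hpar]
        subst hqe
        have hwmd : T.InMD w := parent_inMD H hu.1 hpar
        have hmd : w ∈ T.mdSet := Finset.mem_filter.mpr ⟨hwmd.1, hwmd⟩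
        exact ⟨⟨hmd, Finset.mem_univ _⟩, u, hu.1, by simp [hpar]⟩
  have hinj : Set.InjOn pp nonroots := by
    intro u hu v hv huv
    simp only [hnr, Finset.coe_filter, Set.mem_setOf_eq] at hu hv
    rcases hupar : T.par u with _ | ⟨w, s⟩
    · exact absurd hupar hu.2
    rcases hvpar : T.par v with _ | ⟨w', s'⟩
    · exact absurd hvpar hv.2
    have : (w, s) = (w', s') := by
      have h1 : pp u = (w, s) := by simp [hpp, hupar]
      have h2 : pp v = (w', s') := by simp [hpp, hvpar]
      rw [← h1, ← h2, huv]
    cases this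
    exact T.par_inj u hu.1 v hv.1 w s hupar hvpar
  have hocc_card : ((T.mdSet ×ˢ (Finset.univ : Finset (Fin p))).filter
      (fun q => ¬ ∀ u ∈ T.verts, T.par u ≠ some q)).card = nonroots.card := by
    rw [hocc, Finset.card_image_of_injOn hinj]
  have hnr_card : nonroots.card = n - 1 := by
    have : T.roots.card + nonroots.card = T.verts.card := by
      rw [roots, hnr]
      exact Finset.card_filter_add_card_filter_not _
    rw [hT.2, hT.1, Nat.card_Icc] at this
    omega
  have hsplit := Finset.card_filter_add_card_filter_not
    (s := T.mdSet ×ˢ (Finset.univ : Finset (Fin p)))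
    (p := fun q => ∀ u ∈ T.verts, T.par u ≠ some q)
  rw [hocc_card, hnr_card, Finset.card_product, Finset.card_univ, Fintype.card_fin, hmd]
    at hsplit
  constructor
  · rw [FS]; omega
  · omega

/-- finiteness of subtypes of forests with vertex set contained in [n] -/
lemma finite_aux (n : ℕ) (P : PForest p → Prop)
    (hP : ∀ T, P T → T.verts = Finset.Icc 1 n) : Finite {T : PForest p // P T} := by
  classical
  let f : {T : PForest p // P T} → (Fin (n + 1) → Option (Fin (n + 1) × Fin p)) :=
    fun T v => (T.1.par v).bind
      (fun q => if h : q.1 < n + 1 then some (⟨q.1, h⟩, q.2) else none)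
  apply Finite.of_injective f
  intro T U hTU
  have hv : T.1.verts = U.1.verts := by rw [hP _ T.2, hP _ U.2]
  apply Subtype.ext
  apply pext hv
  funext v
  by_cases hvn : v < n + 1
  · have := congrFun hTU ⟨v, hvn⟩
    simp only [f] at this
    rcases hT : T.1.par v with _ | ⟨w, s⟩ <;> rcases hU : U.1.par v with _ | ⟨w', s'⟩
    · rfl
    · rw [hT, hU] at this
      have hw'v : w' ∈ U.1.verts := by
        refine U.1.par_mem v ?_ w' s' hU
        by_contra hc
        rw [U.1.par_eq_none_of_not_mem v hc] at hU; exact Option.some_ne_none _ hU.symm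
      have : w' < n + 1 := by
        rw [hP _ U.2] at hw'v; simp at hw'v; omega
      simp_all
      omega
    · rw [hT, hU] at this
      have hwv : w ∈ T.1.verts := by
        refine T.1.par_mem v ?_ w s hT
        by_contra hc
        rw [T.1.par_eq_none_of_not_mem v hc] at hT; exact Option.some_ne_none _ hT.symm
      have : w < n + 1 := by
        rw [hP _ T.2] at hwv; simp at hwv; omega
      simp_all
      omega
    · rw [hT, hU] at this
      have hwv : w ∈ T.1.verts := by
        refine T.1.par_mem v ?_ w s hT
        by_contra hc
        rw [T.1.par_eq_none_of_not_mem v hc] at hT; exact Option.some_ne_none _ hT.symm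
      have hw'v : w' ∈ U.1.verts := by
        refine U.1.par_mem v ?_ w' s' hU
        by_contra hc
        rw [U.1.par_eq_none_of_not_mem v hc] at hU; exact Option.some_ne_none _ hU.symm
      have h1 : w < n + 1 := by rw [hP _ T.2] at hwv; simp at hwv; omega
      have h2 : w' < n + 1 := by rw [hP _ U.2] at hw'v; simp at hw'v; omega
      simp only [Option.bind_some, dif_pos h1, dif_pos h2, Option.some.injEq,
        Prod.mk.injEq, Fin.mk.injEq] at this
      obtain ⟨hw, hs⟩ := this
      rw [hw, hs]
  · have h1 : T.1.par v = none := T.1.par_eq_none_of_not_mem v (by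
      rw [hP _ T.2]; simp; omega)
    have h2 : U.1.par v = none := U.1.par_eq_none_of_not_mem v (by
      rw [hP _ U.2]; simp; omega)
    rw [h1, h2]


/-! ### Deletion of the leaf 1 -/

def delPar (T : PForest p) : ℕ → Option (ℕ × Fin p) := fun v =>
  if v = 0 then none else (T.par (v + 1)).map (fun q => (q.1 - 1, q.2))

def delStep (T : PForest p) : ℕ → ℕ :=
  fun x => ((delPar T x).map Prod.fst).getD x

lemma par_fst_ne_one {T : PForest p} (hleaf : T.IsLeaf 1) {u w : ℕ} {s : Fin p}
    (h : T.par u = some (w, s)) : w ≠ 1 := fun hw => hleaf u s (hw ▸ h)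

lemma par_fst_pos {T : PForest p} {n : ℕ} (hT : T.verts = Finset.Icc 1 n)
    {u w : ℕ} {s : Fin p} (h : T.par u = some (w, s)) : 1 ≤ w := by
  have hu : u ∈ T.verts := by
    by_contra hc
    rw [T.par_eq_none_of_not_mem u hc] at h; exact Option.some_ne_none _ h.symm
  have := T.par_mem u hu w s h
  rw [hT] at this; simp at this; omega

lemma mem_pos {T : PForest p} {n : ℕ} (hT : T.verts = Finset.Icc 1 n)
    {u : ℕ} (h : u ∈ T.verts) : 1 ≤ u ∧ u ≤ n := by
  rw [hT] at h; simpa using h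

lemma delStep_eq {T : PForest p} {n : ℕ} (hT : T.verts = Finset.Icc 1 n)
    (hleaf : T.IsLeaf 1) {u : ℕ} (hu : u ∈ T.verts) (hu1 : u ≠ 1) :
    delStep T (u - 1) = T.step u - 1 := by
  have hu2 : 2 ≤ u := by have := (mem_pos hT hu).1; omega
  have h0 : u - 1 ≠ 0 := by omega
  have h1 : u - 1 + 1 = u := by omega
  rcases hpar : T.par u with _ | ⟨w, s⟩
  · simp [delStep, delPar, h0, h1, hpar, step_eq_self hpar]
  · rw [step_eq_of_par hpar]
    simp [delStep, delPar, h0, h1, hpar]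

lemma delStep_iter {T : PForest p} {n : ℕ} (hT : T.verts = Finset.Icc 1 n)
    (hleaf : T.IsLeaf 1) (k : ℕ) {u : ℕ} (hu : u ∈ T.verts) (hu1 : u ≠ 1) :
    (delStep T)^[k] (u - 1) = T.step^[k] u - 1 := by
  induction k generalizing u with
  | zero => rfl
  | succ k ih =>
    rw [Function.iterate_succ_apply, Function.iterate_succ_apply,
      delStep_eq hT hleaf hu hu1]
    exact ih (step_mem hu) (step_iterate_ne_of_leaf hleaf hu1 1)

/-- the forest obtained by deleting the leaf `1` and shifting all labels down -/
def del (T : PForest p) (n : ℕ) (hT : T.IsTreeOn n) (hn : 2 ≤ n)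
    (hleaf : T.IsLeaf 1) : PForest p where
  verts := Finset.Icc 1 (n - 1)
  par := delPar T
  par_eq_none_of_not_mem := by
    intro v hv
    simp only [Finset.mem_Icc, not_and, not_le] at hv
    by_cases h0 : v = 0
    · simp [delPar, h0]
    · have : v + 1 ∉ T.verts := by
        rw [hT.1]; simp; omega
      simp [delPar, h0, T.par_eq_none_of_not_mem _ this]
  par_mem := by
    intro v hv w s h
    simp only [Finset.mem_Icc] at hv
    have h0 : v ≠ 0 := by omega
    simp only [delPar, if_neg h0, Option.map_eq_some_iff] at h
    obtain ⟨⟨w0, s0⟩, hpar, heq⟩ := h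
    simp only [Prod.mk.injEq] at heq
    have hv1 : v + 1 ∈ T.verts := by rw [hT.1]; simp; omega
    have hw0 : w0 ∈ T.verts := T.par_mem _ hv1 w0 s0 hpar
    have hw01 : w0 ≠ 1 := par_fst_ne_one hleaf hpar
    have := (mem_pos hT.1 hw0)
    simp only [Finset.mem_Icc]
    omega
  par_inj := by
    intro u hu v hv w s h1 h2
    simp only [Finset.mem_Icc] at hu hv
    have hu0 : u ≠ 0 := by omega
    have hv0 : v ≠ 0 := by omega
    simp only [delPar, if_neg hu0, Option.map_eq_some_iff] at h1
    simp only [delPar, if_neg hv0, Option.map_eq_some_iff] at h2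
    obtain ⟨⟨w0, s0⟩, hp1, he1⟩ := h1
    obtain ⟨⟨w1, s1⟩, hp2, he2⟩ := h2
    simp only [Prod.mk.injEq] at he1 he2
    have hw00 : 1 ≤ w0 := par_fst_pos hT.1 hp1
    have hw10 : 1 ≤ w1 := par_fst_pos hT.1 hp2
    have hw01 : w0 ≠ 1 := par_fst_ne_one hleaf hp1
    have hw11 : w1 ≠ 1 := par_fst_ne_one hleaf hp2
    have hw : w0 = w1 := by omega
    have hs : s0 = s1 := by rw [he1.2, he2.2]
    have hu1 : u + 1 ∈ T.verts := by rw [hT.1]; simp; omega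
    have hv1 : v + 1 ∈ T.verts := by rw [hT.1]; simp; omega
    have := T.par_inj (u + 1) hu1 (v + 1) hv1 w0 s0 hp1 (by rw [hw, hs]; exact hp2)
    omega
  reaches_root := by
    intro v hv
    simp only [Finset.mem_Icc] at hv
    have hv1 : v + 1 ∈ T.verts := by rw [hT.1]; simp; omega
    have hne : v + 1 ≠ 1 := by omega
    obtain ⟨k, hk⟩ := reaches_root' T hv1
    refine ⟨k, ?_⟩
    have hiter : (delStep T)^[k] v = T.step^[k] (v + 1) - 1 := by
      have := delStep_iter hT.1 hleaf k hv1 hne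
      simpa using this
    show delPar T ((delStep T)^[k] v) = none
    rw [hiter]
    set x := T.step^[k] (v + 1) with hx
    have hxv : x ∈ T.verts := step_iterate_mem hv1 k
    have hxne : x ≠ 1 := step_iterate_ne_of_leaf hleaf hne k
    have hx2 : 2 ≤ x := by have := (mem_pos hT.1 hxv).1; omega
    have h0 : x - 1 ≠ 0 := by omega
    have h1 : x - 1 + 1 = x := by omega
    simp [delPar, h0, h1, hk]

lemma del_step (T : PForest p) (n : ℕ) (hT : T.IsTreeOn n) (hn : 2 ≤ n)
    (hleaf : T.IsLeaf 1) : (del T n hT hn hleaf).step = delStep T := rfl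

lemma del_inMD_iff (T : PForest p) (n : ℕ) (hT : T.IsTreeOn n) (hn : 2 ≤ n)
    (hleaf : T.IsLeaf 1) {v : ℕ} (hv : v ∈ Finset.Icc 1 (n - 1)) :
    (del T n hT hn hleaf).InMD v ↔ T.InMD (v + 1) := by
  simp only [Finset.mem_Icc] at hv
  have hv1 : v + 1 ∈ T.verts := by rw [hT.1]; simp; omega
  have hne : v + 1 ≠ 1 := by omega
  have hiter : ∀ k, (del T n hT hn hleaf).step^[k] v = T.step^[k] (v + 1) - 1 := by
    intro k
    rw [del_step]
    have := delStep_iter hT.1 hleaf k hv1 hne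
    simpa using this
  have hDv : v ∈ (del T n hT hn hleaf).verts := by
    show v ∈ Finset.Icc 1 (n - 1); simp; omega
  constructor
  · intro h
    refine ⟨hv1, fun k w s hk => ?_⟩
    set x := T.step^[k] (v + 1) with hxdef
    have hxv : x ∈ T.verts := step_iterate_mem hv1 k
    have hxne : x ≠ 1 := step_iterate_ne_of_leaf hleaf hne k
    have hx2 : 2 ≤ x := by have := (mem_pos hT.1 hxv).1; omega
    have hw1 : w ≠ 1 := par_fst_ne_one hleaf hk
    have hw0 : 1 ≤ w := par_fst_pos hT.1 hk
    have hD : (del T n hT hn hleaf).par ((del T n hT hn hleaf).step^[k] v)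
        = some (w - 1, s) := by
      rw [hiter k]
      show delPar T (x - 1) = some (w - 1, s)
      have h0 : x - 1 ≠ 0 := by omega
      have h1 : x - 1 + 1 = x := by omega
      simp [delPar, h0, h1, hk]
    have := h.2 k (w - 1) s hD
    rw [hiter k] at this
    omega
  · intro h
    refine ⟨hDv, fun k w s hk => ?_⟩
    rw [hiter k] at hk ⊢
    set x := T.step^[k] (v + 1) with hxdef
    have hxv : x ∈ T.verts := step_iterate_mem hv1 k
    have hxne : x ≠ 1 := step_iterate_ne_of_leaf hleaf hne k
    have hx2 : 2 ≤ x := by have := (mem_pos hT.1 hxv).1; omega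
    have h0 : x - 1 ≠ 0 := by omega
    have h1 : x - 1 + 1 = x := by omega
    have hk' : delPar T (x - 1) = some (w, s) := hk
    simp only [delPar, if_neg h0, h1] at hk'
    rcases hpar : T.par x with _ | ⟨w0, s0⟩
    · rw [hpar] at hk'; simp at hk'
    · rw [hpar] at hk'
      simp only [Option.map_some, Option.some.injEq, Prod.mk.injEq] at hk'
      have hk := hk'
      have := h.2 k w0 s0 hpar
      have hw01 : w0 ≠ 1 := par_fst_ne_one hleaf hpar
      have hw00 : 1 ≤ w0 := par_fst_pos hT.1 hpar
      omega


lemma del_mdSet (T : PForest p) (n : ℕ) (hT : T.IsTreeOn n) (hn : 2 ≤ n)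
    (hleaf : T.IsLeaf 1) :
    (del T n hT hn hleaf).mdSet = (T.mdSet.erase 1).image (· - 1) := by
  ext v
  simp only [mdSet, Finset.mem_filter, Finset.mem_image, Finset.mem_erase]
  constructor
  · intro ⟨hv, hmd⟩
    have hv' : v ∈ Finset.Icc 1 (n - 1) := hv
    rw [del_inMD_iff T n hT hn hleaf hv'] at hmd
    simp only [Finset.mem_Icc] at hv'
    exact ⟨v + 1, ⟨⟨by omega, hmd.1, hmd⟩, by omega⟩⟩
  · rintro ⟨u, ⟨hu1, huv, humd⟩, rfl⟩
    have := mem_pos hT.1 huv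
    have hv' : u - 1 ∈ Finset.Icc 1 (n - 1) := by simp; omega
    have h1 : u - 1 + 1 = u := by omega
    refine ⟨hv', ?_⟩
    rw [del_inMD_iff T n hT hn hleaf hv', h1]
    exact humd

lemma del_mdSet_card (T : PForest p) (n k : ℕ) (hT : T.IsTreeOn n) (hn : 2 ≤ n)
    (hmd : T.mdSet.card = k) (H : ∀ v ∈ T.verts, ¬ T.InMD v → T.IsLeaf v)
    (hleaf : T.IsLeaf 1) : (del T n hT hn hleaf).mdSet.card = k - 1 := by
  rw [del_mdSet]
  have h1md : (1 : ℕ) ∈ T.mdSet := by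
    have := one_inMD hT hn H hleaf
    simp [mdSet, this.1, this]
  rw [Finset.card_image_of_injOn, Finset.card_erase_of_mem h1md, hmd]
  intro a ha b hb hab
  simp only [Finset.coe_erase, Set.mem_diff, Finset.mem_coe, Set.mem_singleton_iff] at ha hb
  have ha' := mem_pos hT.1 (Finset.mem_filter.mp ha.1).1
  have hb' := mem_pos hT.1 (Finset.mem_filter.mp hb.1).1
  have ha1 : a ≠ 1 := ha.2
  have hb1 : b ≠ 1 := hb.2
  have hab' : a - 1 = b - 1 := hab
  omega

lemma del_isTreeOn (T : PForest p) (n : ℕ) (hT : T.IsTreeOn n) (hn : 2 ≤ n)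
    (hleaf : T.IsLeaf 1) : (del T n hT hn hleaf).IsTreeOn (n - 1) := by
  refine ⟨rfl, ?_⟩
  have hroots : (del T n hT hn hleaf).roots = T.roots.image (· - 1) := by
    ext v
    simp only [roots, Finset.mem_filter, Finset.mem_image]
    constructor
    · intro ⟨hv, hpar⟩
      have hv' : v ∈ Finset.Icc 1 (n - 1) := hv
      simp only [Finset.mem_Icc] at hv'
      have h0 : v ≠ 0 := by omega
      have hp : delPar T v = none := hpar
      simp only [delPar, if_neg h0, Option.map_eq_none_iff] at hp
      refine ⟨v + 1, ⟨⟨by rw [hT.1]; simp; omega, hp⟩, by omega⟩⟩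
    · rintro ⟨u, ⟨huv, hupar⟩, rfl⟩
      have hu := mem_pos hT.1 huv
      have hu1 : u ≠ 1 := fun h => one_not_root hT hn hleaf (h ▸ hupar)
      have h0 : u - 1 ≠ 0 := by omega
      have h1 : u - 1 + 1 = u := by omega
      constructor
      · show u - 1 ∈ Finset.Icc 1 (n - 1); simp; omega
      · show delPar T (u - 1) = none
        simp [delPar, h0, h1, hupar]
  rw [hroots, Finset.card_image_of_injOn, hT.2]
  · omega
  · intro a ha b hb hab
    simp only [roots, Finset.coe_filter, Set.mem_setOf_eq] at ha hb
    have ha' := mem_pos hT.1 ha.1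
    have hb' := mem_pos hT.1 hb.1
    have ha1 : a ≠ 1 := fun h => one_not_root hT hn hleaf (h ▸ ha.2)
    have hb1 : b ≠ 1 := fun h => one_not_root hT hn hleaf (h ▸ hb.2)
    have hab' : a - 1 = b - 1 := hab
    omega

lemma del_leaf_cond (T : PForest p) (n : ℕ) (hT : T.IsTreeOn n) (hn : 2 ≤ n)
    (H : ∀ v ∈ T.verts, ¬ T.InMD v → T.IsLeaf v) (hleaf : T.IsLeaf 1) :
    ∀ v ∈ (del T n hT hn hleaf).verts, ¬ (del T n hT hn hleaf).InMD v →
      (del T n hT hn hleaf).IsLeaf v := by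
  intro v hv hnmd
  have hv' : v ∈ Finset.Icc 1 (n - 1) := hv
  rw [del_inMD_iff T n hT hn hleaf hv'] at hnmd
  simp only [Finset.mem_Icc] at hv'
  have hv1 : v + 1 ∈ T.verts := by rw [hT.1]; simp; omega
  have hL : T.IsLeaf (v + 1) := H (v + 1) hv1 hnmd
  intro u s hus
  have h0 : u ≠ 0 := by
    intro h; subst h
    have h' : delPar T 0 = some (v, s) := hus
    simp [delPar] at h'
  have hus' : delPar T u = some (v, s) := hus
  simp only [delPar, if_neg h0, Option.map_eq_some_iff] at hus'
  obtain ⟨⟨w0, s0⟩, hpar, heq⟩ := hus'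
  simp only [Prod.mk.injEq] at heq
  have hw00 : 1 ≤ w0 := par_fst_pos hT.1 hpar
  have hw01 : w0 ≠ 1 := par_fst_ne_one hleaf hpar
  have : w0 = v + 1 := by omega
  exact hL (u + 1) s0 (by rw [← this]; exact hpar)

/-- the slot in the reduced tree where the leaf `1` was attached -/
noncomputable def slotOf (T : PForest p) (hp : 0 < p) : ℕ × Fin p :=
  (T.par 1).getD (2, ⟨0, hp⟩)

lemma del_slot_mem (T : PForest p) (n : ℕ) (hp : 0 < p) (hT : T.IsTreeOn n) (hn : 2 ≤ n)
    (H : ∀ v ∈ T.verts, ¬ T.InMD v → T.IsLeaf v) (hleaf : T.IsLeaf 1) :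
    ((slotOf T hp).1 - 1, (slotOf T hp).2) ∈ (del T n hT hn hleaf).FS := by
  have h1v : (1 : ℕ) ∈ T.verts := by rw [hT.1]; simp; omega
  rcases hpar : T.par 1 with _ | ⟨w, s⟩
  · exact absurd hpar (one_not_root hT hn hleaf)
  have hslot : slotOf T hp = (w, s) := by simp [slotOf, hpar]
  rw [hslot]
  have hwmd : T.InMD w := parent_inMD H h1v hpar
  have hw1 : w ≠ 1 := par_fst_ne_one hleaf hpar
  have hwv := mem_pos hT.1 hwmd.1
  simp only [FS, Finset.mem_filter, Finset.mem_product, Finset.mem_univ, and_true]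
  constructor
  · rw [del_mdSet]
    simp only [Finset.mem_image, Finset.mem_erase]
    exact ⟨w, ⟨hw1, by simp [mdSet, hwmd.1, hwmd]⟩, rfl⟩
  · intro u hu habs
    have hu' : u ∈ Finset.Icc 1 (n - 1) := hu
    simp only [Finset.mem_Icc] at hu'
    have h0 : u ≠ 0 := by omega
    have habs' : delPar T u = some (w - 1, s) := habs
    simp only [delPar, if_neg h0, Option.map_eq_some_iff] at habs'
    obtain ⟨⟨w0, s0⟩, hpar0, heq⟩ := habs'
    simp only [Prod.mk.injEq] at heq
    have hw00 : 1 ≤ w0 := par_fst_pos hT.1 hpar0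
    have hw01 : w0 ≠ 1 := par_fst_ne_one hleaf hpar0
    have hww : w0 = w := by omega
    have hu1 : u + 1 ∈ T.verts := by rw [hT.1]; simp; omega
    have := T.par_inj (u + 1) hu1 1 h1v w s (by rw [← hww, ← heq.2]; exact hpar0) hpar
    omega


/-! ### Attaching a new leaf 1 -/

def attPar (T : PForest p) (w : ℕ) (s : Fin p) : ℕ → Option (ℕ × Fin p) := fun v =>
  if v = 1 then some (w + 1, s) else (T.par (v - 1)).map (fun q => (q.1 + 1, q.2))

def attStep (T : PForest p) (w : ℕ) (s : Fin p) : ℕ → ℕ :=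
  fun x => ((attPar T w s x).map Prod.fst).getD x

lemma attStep_eq {T : PForest p} {m : ℕ} (hT : T.verts = Finset.Icc 1 m)
    {w : ℕ} {s : Fin p} {u : ℕ} (hu : u ∈ T.verts) :
    attStep T w s (u + 1) = T.step u + 1 := by
  have hu1 : 1 ≤ u := (mem_pos hT hu).1
  have h1 : u + 1 ≠ 1 := by omega
  rcases hpar : T.par u with _ | ⟨w0, s0⟩
  · simp [attStep, attPar, h1, Nat.one_le_iff_ne_zero.mp hu1, hpar, step_eq_self hpar]
  · rw [step_eq_of_par hpar]
    simp [attStep, attPar, h1, Nat.one_le_iff_ne_zero.mp hu1, hpar]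

lemma attStep_iter {T : PForest p} {m : ℕ} (hT : T.verts = Finset.Icc 1 m)
    {w : ℕ} {s : Fin p} (k : ℕ) {u : ℕ} (hu : u ∈ T.verts) :
    (attStep T w s)^[k] (u + 1) = T.step^[k] u + 1 := by
  induction k generalizing u with
  | zero => rfl
  | succ k ih =>
    rw [Function.iterate_succ_apply, Function.iterate_succ_apply,
      attStep_eq hT hu]
    exact ih (step_mem hu)

/-- the forest obtained by shifting all labels up and attaching a new leaf `1`
at slot `(w+1, s)` -/
def att (T : PForest p) (n : ℕ) (w : ℕ) (s : Fin p) (hT : T.IsTreeOn (n - 1))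
    (hn : 2 ≤ n) (hws : (w, s) ∈ T.FS) : PForest p where
  verts := Finset.Icc 1 n
  par := attPar T w s
  par_eq_none_of_not_mem := by
    intro v hv
    simp only [Finset.mem_Icc, not_and, not_le] at hv
    have h1 : v ≠ 1 := by intro h; subst h; omega
    have : v - 1 ∉ T.verts := by
      rw [hT.1]; simp only [Finset.mem_Icc, not_and, not_le]; omega
    simp [attPar, h1, T.par_eq_none_of_not_mem _ this]
  par_mem := by
    have hwmem : w ∈ T.mdSet := by
      have := Finset.mem_filter.mp hws
      exact (Finset.mem_product.mp this.1).1
    have hwv : w ∈ T.verts := (Finset.mem_filter.mp hwmem).1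
    have hw := mem_pos hT.1 hwv
    intro v hv u t h
    simp only [Finset.mem_Icc] at hv
    by_cases h1 : v = 1
    · subst h1
      have h' : (some (w + 1, s) : Option (ℕ × Fin p)) = some (u, t) := h
      simp only [Option.some.injEq, Prod.mk.injEq] at h'
      obtain ⟨h'1, h'2⟩ := h'
      simp only [Finset.mem_Icc]
      omega
    · have h' : attPar T w s v = some (u, t) := h
      simp only [attPar, if_neg h1, Option.map_eq_some_iff] at h'
      obtain ⟨⟨w0, s0⟩, hpar, heq⟩ := h'
      simp only [Prod.mk.injEq] at heq
      have hv1 : v - 1 ∈ T.verts := by rw [hT.1]; simp; omega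
      have hw0 := mem_pos hT.1 (T.par_mem _ hv1 w0 s0 hpar)
      simp only [Finset.mem_Icc]
      omega
  par_inj := by
    have hfree : ∀ u ∈ T.verts, T.par u ≠ some (w, s) :=
      (Finset.mem_filter.mp hws).2
    intro u hu v hv u0 t h1 h2
    simp only [Finset.mem_Icc] at hu hv
    by_cases hu1 : u = 1 <;> by_cases hv1 : v = 1
    · rw [hu1, hv1]
    · exfalso
      subst hu1
      have h1' : (some (w + 1, s) : Option (ℕ × Fin p)) = some (u0, t) := h1
      simp only [Option.some.injEq, Prod.mk.injEq] at h1'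
      have h2' : attPar T w s v = some (u0, t) := h2
      simp only [attPar, if_neg hv1, Option.map_eq_some_iff] at h2'
      obtain ⟨⟨w0, s0⟩, hpar, heq⟩ := h2'
      simp only [Prod.mk.injEq] at heq
      have hv1' : v - 1 ∈ T.verts := by rw [hT.1]; simp; omega
      have hww : w0 = w := by omega
      have hss : s0 = s := by rw [heq.2, ← h1'.2]
      exact hfree (v - 1) hv1' (by rw [← hww, ← hss]; exact hpar)
    · exfalso
      subst hv1
      have h1' : attPar T w s u = some (u0, t) := h1
      simp only [attPar, if_neg hu1, Option.map_eq_some_iff] at h1'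
      obtain ⟨⟨w0, s0⟩, hpar, heq⟩ := h1'
      simp only [Prod.mk.injEq] at heq
      have h2' : (some (w + 1, s) : Option (ℕ × Fin p)) = some (u0, t) := h2
      simp only [Option.some.injEq, Prod.mk.injEq] at h2'
      have hu1' : u - 1 ∈ T.verts := by rw [hT.1]; simp; omega
      have hww : w0 = w := by omega
      have hss : s0 = s := by rw [heq.2, ← h2'.2]
      exact hfree (u - 1) hu1' (by rw [← hww, ← hss]; exact hpar)
    · have h1' : attPar T w s u = some (u0, t) := h1
      simp only [attPar, if_neg hu1, Option.map_eq_some_iff] at h1'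
      obtain ⟨⟨w0, s0⟩, hpar, heq⟩ := h1'
      simp only [Prod.mk.injEq] at heq
      have h2' : attPar T w s v = some (u0, t) := h2
      simp only [attPar, if_neg hv1, Option.map_eq_some_iff] at h2'
      obtain ⟨⟨w1, s1⟩, hpar', heq'⟩ := h2'
      simp only [Prod.mk.injEq] at heq'
      have hu1' : u - 1 ∈ T.verts := by rw [hT.1]; simp; omega
      have hv1' : v - 1 ∈ T.verts := by rw [hT.1]; simp; omega
      have hww : w0 = w1 := by omega
      have hss : s0 = s1 := by rw [heq.2, heq'.2]
      have := T.par_inj (u - 1) hu1' (v - 1) hv1' w0 s0 hpar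
        (by rw [hww, hss]; exact hpar')
      omega
  reaches_root := by
    have hwmem : w ∈ T.mdSet := by
      have := Finset.mem_filter.mp hws
      exact (Finset.mem_product.mp this.1).1
    have hwv : w ∈ T.verts := (Finset.mem_filter.mp hwmem).1
    intro v hv
    simp only [Finset.mem_Icc] at hv
    have key : ∀ u ∈ T.verts, ∃ k, attPar T w s ((attStep T w s)^[k] (u + 1)) = none := by
      intro u hu
      obtain ⟨k, hk⟩ := reaches_root' T hu
      refine ⟨k, ?_⟩
      rw [attStep_iter hT.1 k hu]
      set x := T.step^[k] u with hx
      have hxv : x ∈ T.verts := step_iterate_mem hu k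
      have hx1 : 1 ≤ x := (mem_pos hT.1 hxv).1
      have h1 : x + 1 ≠ 1 := by omega
      simp [attPar, h1, Nat.one_le_iff_ne_zero.mp hx1, hk]
    by_cases h1 : v = 1
    · subst h1
      obtain ⟨k, hk⟩ := key w hwv
      refine ⟨k + 1, ?_⟩
      have hstep : (fun x => ((attPar T w s x).map Prod.fst).getD x) 1 = w + 1 := by
        simp [attPar]
      rw [Function.iterate_succ_apply]
      show attPar T w s ((attStep T w s)^[k] ((attStep T w s) 1)) = none
      have : attStep T w s 1 = w + 1 := by simp [attStep, attPar]
      rw [this]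
      exact hk
    · have hv1 : v - 1 ∈ T.verts := by rw [hT.1]; simp; omega
      obtain ⟨k, hk⟩ := key (v - 1) hv1
      have hveq : v - 1 + 1 = v := by omega
      rw [hveq] at hk
      exact ⟨k, hk⟩

lemma att_step (T : PForest p) (n : ℕ) (w : ℕ) (s : Fin p) (hT : T.IsTreeOn (n - 1))
    (hn : 2 ≤ n) (hws : (w, s) ∈ T.FS) :
    (att T n w s hT hn hws).step = attStep T w s := rfl

lemma att_inMD_iff (T : PForest p) (n : ℕ) (w : ℕ) (s : Fin p) (hT : T.IsTreeOn (n - 1))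
    (hn : 2 ≤ n) (hws : (w, s) ∈ T.FS) {u : ℕ} (hu : u ∈ T.verts) :
    (att T n w s hT hn hws).InMD (u + 1) ↔ T.InMD u := by
  have hu' := mem_pos hT.1 hu
  have huA : u + 1 ∈ (att T n w s hT hn hws).verts := by
    show u + 1 ∈ Finset.Icc 1 n; simp; omega
  have hiter : ∀ k, (att T n w s hT hn hws).step^[k] (u + 1) = T.step^[k] u + 1 :=
    fun k => attStep_iter hT.1 k hu
  constructor
  · intro h
    refine ⟨hu, fun k w0 s0 hk => ?_⟩
    set x := T.step^[k] u with hx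
    have hxv : x ∈ T.verts := step_iterate_mem hu k
    have hx1 : 1 ≤ x := (mem_pos hT.1 hxv).1
    have h1 : x + 1 ≠ 1 := by omega
    have hA : (att T n w s hT hn hws).par ((att T n w s hT hn hws).step^[k] (u + 1))
        = some (w0 + 1, s0) := by
      rw [hiter k]
      show attPar T w s (x + 1) = some (w0 + 1, s0)
      simp [attPar, h1, Nat.one_le_iff_ne_zero.mp hx1, hk]
    have := h.2 k (w0 + 1) s0 hA
    rw [hiter k] at this
    omega
  · intro h
    refine ⟨huA, fun k w0 s0 hk => ?_⟩
    rw [hiter k] at hk ⊢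
    set x := T.step^[k] u with hx
    have hxv : x ∈ T.verts := step_iterate_mem hu k
    have hx1 : 1 ≤ x := (mem_pos hT.1 hxv).1
    have h1 : x + 1 ≠ 1 := by omega
    have hk' : attPar T w s (x + 1) = some (w0, s0) := hk
    simp only [attPar, if_neg h1, Nat.add_sub_cancel, Option.map_eq_some_iff] at hk'
    obtain ⟨⟨w1, s1⟩, hpar, heq⟩ := hk'
    simp only [Prod.mk.injEq] at heq
    have := h.2 k w1 s1 hpar
    omega

lemma att_one_inMD (T : PForest p) (n : ℕ) (w : ℕ) (s : Fin p) (hT : T.IsTreeOn (n - 1))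
    (hn : 2 ≤ n) (hws : (w, s) ∈ T.FS) : (att T n w s hT hn hws).InMD 1 := by
  have hwmem : w ∈ T.mdSet := by
    have := Finset.mem_filter.mp hws
    exact (Finset.mem_product.mp this.1).1
  have hwmd : T.InMD w := (Finset.mem_filter.mp hwmem).2
  have hwv : w ∈ T.verts := hwmd.1
  have hw := mem_pos hT.1 hwv
  have h1A : (1 : ℕ) ∈ (att T n w s hT hn hws).verts := by
    show (1 : ℕ) ∈ Finset.Icc 1 n; simp; omega
  refine ⟨h1A, fun k w0 s0 hk => ?_⟩
  cases k with
  | zero =>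
    simp only [Function.iterate_zero, id_eq] at hk ⊢
    have hk' : (some (w + 1, s) : Option (ℕ × Fin p)) = some (w0, s0) := hk
    simp only [Option.some.injEq, Prod.mk.injEq] at hk'
    obtain ⟨hk1, hk2⟩ := hk'
    omega
  | succ k =>
    have hst : (att T n w s hT hn hws).step 1 = w + 1 := by
      show attStep T w s 1 = w + 1
      simp [attStep, attPar]
    rw [Function.iterate_succ_apply, hst] at hk ⊢
    rw [att_step] at hk ⊢
    rw [attStep_iter hT.1 k hwv] at hk ⊢
    set x := T.step^[k] w with hx
    have hxv : x ∈ T.verts := step_iterate_mem hwv k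
    have hx1 : 1 ≤ x := (mem_pos hT.1 hxv).1
    have h1 : x + 1 ≠ 1 := by omega
    have hk' : attPar T w s (x + 1) = some (w0, s0) := hk
    simp only [attPar, if_neg h1, Nat.add_sub_cancel, Option.map_eq_some_iff] at hk'
    obtain ⟨⟨w1, s1⟩, hpar, heq⟩ := hk'
    simp only [Prod.mk.injEq] at heq
    have := hwmd.2 k w1 s1 hpar
    omega


lemma att_mdSet (T : PForest p) (n : ℕ) (w : ℕ) (s : Fin p) (hT : T.IsTreeOn (n - 1))
    (hn : 2 ≤ n) (hws : (w, s) ∈ T.FS) :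
    (att T n w s hT hn hws).mdSet = insert 1 (T.mdSet.image (· + 1)) := by
  ext v
  simp only [mdSet, Finset.mem_filter, Finset.mem_insert, Finset.mem_image]
  constructor
  · intro ⟨hv, hmd⟩
    have hv' : v ∈ Finset.Icc 1 n := hv
    simp only [Finset.mem_Icc] at hv'
    by_cases h1 : v = 1
    · left; exact h1
    · right
      have hv1 : v - 1 ∈ T.verts := by rw [hT.1]; simp; omega
      have hveq : v - 1 + 1 = v := by omega
      refine ⟨v - 1, ⟨hv1, ?_⟩, hveq⟩
      rw [← att_inMD_iff T n w s hT hn hws hv1, hveq]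
      exact hmd
  · rintro (h1 | ⟨u, ⟨hu, humd⟩, rfl⟩)
    · subst h1
      have := att_one_inMD T n w s hT hn hws
      exact ⟨this.1, this⟩
    · have hu' := mem_pos hT.1 hu
      refine ⟨?_, (att_inMD_iff T n w s hT hn hws hu).mpr humd⟩
      show u + 1 ∈ Finset.Icc 1 n; simp; omega

lemma att_mdSet_card (T : PForest p) (n k : ℕ) (w : ℕ) (s : Fin p)
    (hT : T.IsTreeOn (n - 1)) (hn : 2 ≤ n) (hws : (w, s) ∈ T.FS)
    (hmd : T.mdSet.card = k - 1) (hk : 1 ≤ k) :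
    (att T n w s hT hn hws).mdSet.card = k := by
  rw [att_mdSet]
  have h1 : (1 : ℕ) ∉ T.mdSet.image (· + 1) := by
    simp only [Finset.mem_image, not_exists]
    intro u hu
    have := mem_pos hT.1 (Finset.mem_filter.mp hu.1).1
    have h2 := hu.2
    omega
  rw [Finset.card_insert_of_notMem h1, Finset.card_image_of_injOn, hmd]
  · omega
  · intro a _ b _ hab
    simpa using hab

lemma att_isTreeOn (T : PForest p) (n : ℕ) (w : ℕ) (s : Fin p) (hT : T.IsTreeOn (n - 1))
    (hn : 2 ≤ n) (hws : (w, s) ∈ T.FS) : (att T n w s hT hn hws).IsTreeOn n := by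
  refine ⟨rfl, ?_⟩
  have hroots : (att T n w s hT hn hws).roots = T.roots.image (· + 1) := by
    ext v
    simp only [roots, Finset.mem_filter, Finset.mem_image]
    constructor
    · intro ⟨hv, hpar⟩
      have hv' : v ∈ Finset.Icc 1 n := hv
      simp only [Finset.mem_Icc] at hv'
      have h1 : v ≠ 1 := by
        intro h; subst h
        have : (some (w + 1, s) : Option (ℕ × Fin p)) = none := hpar
        exact Option.some_ne_none _ this
      have hp : attPar T w s v = none := hpar
      simp only [attPar, if_neg h1, Option.map_eq_none_iff] at hp
      have hv1 : v - 1 ∈ T.verts := by rw [hT.1]; simp; omega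
      exact ⟨v - 1, ⟨hv1, hp⟩, by omega⟩
    · rintro ⟨u, ⟨huv, hupar⟩, rfl⟩
      have hu := mem_pos hT.1 huv
      have h1 : u + 1 ≠ 1 := by omega
      constructor
      · show u + 1 ∈ Finset.Icc 1 n; simp; omega
      · show attPar T w s (u + 1) = none
        simp [attPar, h1, Nat.one_le_iff_ne_zero.mp hu.1, hupar]
  rw [hroots, Finset.card_image_of_injOn, hT.2]
  · omega
  · intro a _ b _ hab
    simpa using hab

lemma att_isLeaf_one (T : PForest p) (n : ℕ) (w : ℕ) (s : Fin p) (hT : T.IsTreeOn (n - 1))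
    (hn : 2 ≤ n) (hws : (w, s) ∈ T.FS) : (att T n w s hT hn hws).IsLeaf 1 := by
  intro u t h
  by_cases h1 : u = 1
  · subst h1
    have h' : (some (w + 1, s) : Option (ℕ × Fin p)) = some (1, t) := h
    have h'' : w + 1 = 1 := congrArg (fun o => (o.getD (0, t)).1) h'
    have hwmem : w ∈ T.mdSet := by
      have := Finset.mem_filter.mp hws
      exact (Finset.mem_product.mp this.1).1
    have hw := mem_pos hT.1 (Finset.mem_filter.mp hwmem).1
    omega
  · have h' : attPar T w s u = some (1, t) := h
    simp only [attPar, if_neg h1, Option.map_eq_some_iff] at h'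
    obtain ⟨⟨w0, s0⟩, hpar, heq⟩ := h'
    have heq1 : w0 + 1 = 1 := congrArg Prod.fst heq
    have := par_fst_pos hT.1 hpar
    omega

lemma att_leaf_cond (T : PForest p) (n : ℕ) (w : ℕ) (s : Fin p) (hT : T.IsTreeOn (n - 1))
    (hn : 2 ≤ n) (hws : (w, s) ∈ T.FS)
    (H : ∀ v ∈ T.verts, ¬ T.InMD v → T.IsLeaf v) :
    ∀ v ∈ (att T n w s hT hn hws).verts, ¬ (att T n w s hT hn hws).InMD v →
      (att T n w s hT hn hws).IsLeaf v := by
  intro v hv hnmd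
  have hv' : v ∈ Finset.Icc 1 n := hv
  simp only [Finset.mem_Icc] at hv'
  have h1 : v ≠ 1 := by
    intro h; subst h
    exact hnmd (att_one_inMD T n w s hT hn hws)
  have hv1 : v - 1 ∈ T.verts := by rw [hT.1]; simp; omega
  have hveq : v - 1 + 1 = v := by omega
  have hnmd' : ¬ T.InMD (v - 1) := by
    intro hmd
    exact hnmd (by rw [← hveq]; exact (att_inMD_iff T n w s hT hn hws hv1).mpr hmd)
  have hL : T.IsLeaf (v - 1) := H (v - 1) hv1 hnmd'
  intro u t h
  by_cases hu1 : u = 1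
  · subst hu1
    have h' : (some (w + 1, s) : Option (ℕ × Fin p)) = some (v, t) := h
    simp only [Option.some.injEq, Prod.mk.injEq] at h'
    obtain ⟨h'1, h'2⟩ := h'
    -- v = w + 1, but w ∈ mdSet so v would be in MD
    have hwmem : w ∈ T.mdSet := by
      have := Finset.mem_filter.mp hws
      exact (Finset.mem_product.mp this.1).1
    have hwmd : T.InMD w := (Finset.mem_filter.mp hwmem).2
    apply hnmd
    rw [← h'1]
    exact (att_inMD_iff T n w s hT hn hws hwmd.1).mpr hwmd
  · have h' : attPar T w s u = some (v, t) := h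
    simp only [attPar, if_neg hu1, Option.map_eq_some_iff] at h'
    obtain ⟨⟨w0, s0⟩, hpar, heq⟩ := h'
    simp only [Prod.mk.injEq] at heq
    obtain ⟨heq1, heq2⟩ := heq
    have hw0 : w0 = v - 1 := by omega
    exact hL (u - 1) s0 (by rw [← hw0]; exact hpar)


/-! ### Round trips -/

lemma att_del (T : PForest p) (n : ℕ) (hp : 0 < p) (hT : T.IsTreeOn n) (hn : 2 ≤ n)
    (H : ∀ v ∈ T.verts, ¬ T.InMD v → T.IsLeaf v) (hleaf : T.IsLeaf 1) :
    att (del T n hT hn hleaf) n ((slotOf T hp).1 - 1) (slotOf T hp).2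
      (del_isTreeOn T n hT hn hleaf) hn (del_slot_mem T n hp hT hn H hleaf) = T := by
  apply pext
  · exact hT.1.symm
  · funext v
    show attPar (del T n hT hn hleaf) ((slotOf T hp).1 - 1) (slotOf T hp).2 v = T.par v
    have h1v : (1 : ℕ) ∈ T.verts := by rw [hT.1]; simp; omega
    rcases hpar1 : T.par 1 with _ | ⟨w1, s1⟩
    · exact absurd hpar1 (one_not_root hT hn hleaf)
    have hslot : slotOf T hp = (w1, s1) := by simp [slotOf, hpar1]
    have hw1 : w1 ≠ 1 := par_fst_ne_one hleaf hpar1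
    have hw1' : 1 ≤ w1 := par_fst_pos hT.1 hpar1
    by_cases hv1 : v = 1
    · subst hv1
      rw [attPar, if_pos rfl, hslot, hpar1]
      simp only
      congr 1
      ext <;> simp <;> omega
    · rw [attPar, if_neg hv1]
      by_cases hv0 : v = 0
      · subst hv0
        have h0 : (0 : ℕ) - 1 = 0 := rfl
        rw [h0]
        have : (del T n hT hn hleaf).par 0 = none := by
          show delPar T 0 = none
          simp [delPar]
        rw [this, Option.map_none, T.par_eq_none_of_not_mem 0 (by rw [hT.1]; simp)]
      · -- v ≥ 2
        have hv2 : 2 ≤ v := by omega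
        have hd : (del T n hT hn hleaf).par (v - 1) = delPar T (v - 1) := rfl
        rw [hd, delPar]
        have h0 : v - 1 ≠ 0 := by omega
        rw [if_neg h0]
        have h1 : v - 1 + 1 = v := by omega
        rw [h1]
        rcases hpar : T.par v with _ | ⟨w0, s0⟩
        · simp
        · have hw00 : 1 ≤ w0 := par_fst_pos hT.1 hpar
          simp only [Option.map_some, Option.some.injEq]
          ext <;> simp <;> omega

lemma del_att (T : PForest p) (n : ℕ) (w : ℕ) (s : Fin p) (hp : 0 < p)
    (hT : T.IsTreeOn (n - 1)) (hn : 2 ≤ n) (hws : (w, s) ∈ T.FS) :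
    del (att T n w s hT hn hws) n (att_isTreeOn T n w s hT hn hws) hn
      (att_isLeaf_one T n w s hT hn hws) = T ∧
    slotOf (att T n w s hT hn hws) hp = (w + 1, s) := by
  constructor
  · apply pext
    · exact hT.1.symm
    · funext v
      show delPar (att T n w s hT hn hws) v = T.par v
      by_cases hv0 : v = 0
      · subst hv0
        rw [delPar, if_pos rfl, T.par_eq_none_of_not_mem 0 (by rw [hT.1]; simp)]
      · rw [delPar, if_neg hv0]
        have h1 : v + 1 ≠ 1 := by omega
        have ha : (att T n w s hT hn hws).par (v + 1) = attPar T w s (v + 1) := rfl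
        rw [ha, attPar, if_neg h1]
        have h2 : v + 1 - 1 = v := by omega
        rw [h2]
        rcases hpar : T.par v with _ | ⟨w0, s0⟩
        · simp
        · simp
  · have : (att T n w s hT hn hws).par 1 = attPar T w s 1 := rfl
    rw [slotOf, this, attPar, if_pos rfl]
    rfl


lemma sig_ext {α : Type*} {β : Type*} {P : α → Prop} {F : α → Finset β}
    (x z : Σ a : {a // P a}, {b // b ∈ F a.1}) (h1 : x.1.1 = z.1.1)
    (h2 : x.2.1 = z.2.1) : x = z := by
  obtain ⟨⟨a, ha⟩, ⟨b, hb⟩⟩ := x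
  obtain ⟨⟨a', ha'⟩, ⟨b', hb'⟩⟩ := z
  dsimp at h1 h2
  subst h1
  subst h2
  rfl

end PForest

open PForest

/-- The number of trees in `Y^(p)_{n,k}` in which the vertex labeled `1` is a
leaf equals `((k-1)p - n + 2) · y(n-1, k-1)`. -/
theorem stmt5 (p n k : ℕ) (hp : 2 ≤ p) (hn : 2 ≤ n) (hk1 : 1 ≤ k) (hkn : k < n) :
    (Nat.card {T : PForest p // T.IsTreeOn n ∧ T.mdSet.card = k ∧
        (∀ v ∈ T.verts, ¬ T.InMD v → T.IsLeaf v) ∧ T.IsLeaf 1} : ℤ)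
      = (((k : ℤ) - 1) * p - n + 2) * (y p (n - 1) (k - 1) : ℤ) := by
  classical
  have hp0 : 0 < p := by omega
  set YT := {T : PForest p // T.IsTreeOn (n - 1) ∧ T.mdSet.card = k - 1 ∧
      ∀ v ∈ T.verts, ¬ T.InMD v → T.IsLeaf v} with hYT
  have hYcard : y p (n - 1) (k - 1) = Nat.card YT := rfl
  set ST := {T : PForest p // T.IsTreeOn n ∧ T.mdSet.card = k ∧
      (∀ v ∈ T.verts, ¬ T.InMD v → T.IsLeaf v) ∧ T.IsLeaf 1} with hST
  -- The bijection
  have e : ST ≃ Σ T : YT, {q : ℕ × Fin p // q ∈ T.1.FS} := by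
    refine ⟨?_, ?_, ?_, ?_⟩
    · rintro ⟨T, hT, hmd, hH, hleaf⟩
      exact ⟨⟨del T n hT hn hleaf,
              del_isTreeOn T n hT hn hleaf,
              del_mdSet_card T n k hT hn hmd hH hleaf,
              del_leaf_cond T n hT hn hH hleaf⟩,
             ⟨((slotOf T hp0).1 - 1, (slotOf T hp0).2),
              del_slot_mem T n hp0 hT hn hH hleaf⟩⟩
    · rintro ⟨⟨T, hT, hmd, hH⟩, ⟨⟨w, s⟩, hws⟩⟩
      exact ⟨att T n w s hT hn hws,
             att_isTreeOn T n w s hT hn hws,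
             att_mdSet_card T n k w s hT hn hws hmd hk1,
             att_leaf_cond T n w s hT hn hws hH,
             att_isLeaf_one T n w s hT hn hws⟩
    · rintro ⟨T, hT, hmd, hH, hleaf⟩
      exact Subtype.ext (att_del T n hp0 hT hn hH hleaf)
    · rintro ⟨⟨T, hT, hmd, hH⟩, ⟨⟨w, s⟩, hws⟩⟩
      apply sig_ext
      · exact (del_att T n w s hp0 hT hn hws).1
      · show ((slotOf (att T n w s hT hn hws) hp0).1 - 1,
            (slotOf (att T n w s hT hn hws) hp0).2) = (w, s)
        rw [(del_att T n w s hp0 hT hn hws).2]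
        simp
  haveI hYfin : Finite YT :=
    finite_aux (n - 1) _ (fun T hT => hT.1.1)
  haveI : Fintype YT := Fintype.ofFinite _
  have hcount : Nat.card ST = ∑ T : YT, (T.1.FS).card := by
    rw [Nat.card_congr e, Nat.card_eq_fintype_card, Fintype.card_sigma]
    congr 1
    funext T
    rw [Fintype.card_coe]
  rcases isEmpty_or_nonempty YT with hE | hNE
  · have h1 : Nat.card ST = 0 := by
      rw [hcount, Finset.sum_eq_zero]
      intro x hx
      exact absurd (Finset.mem_univ x) (by simp)
    have h2 : y p (n - 1) (k - 1) = 0 := by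
      rw [hYcard, Nat.card_eq_zero]
      left; exact hE
    rw [h1, h2]
    simp
  · obtain ⟨T0⟩ := hNE
    have hle : n - 1 - 1 ≤ (k - 1) * p :=
      (FS_card hp0 T0.2.1 T0.2.2.1 T0.2.2.2 (by omega)).2
    have hsum : ∀ T : YT, (T.1.FS).card = (k - 1) * p - (n - 1 - 1) :=
      fun T => (FS_card hp0 T.2.1 T.2.2.1 T.2.2.2 (by omega)).1
    have hmain : Nat.card ST = Nat.card YT * ((k - 1) * p - (n - 1 - 1)) := by
      rw [hcount, Finset.sum_congr rfl (fun T _ => hsum T), Finset.sum_const,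
        Finset.card_univ, Nat.card_eq_fintype_card, smul_eq_mul]
    rw [hmain, hYcard]
    have hc1 : ((k - 1 : ℕ) : ℤ) = (k : ℤ) - 1 := by
      rw [Nat.cast_sub hk1]; norm_num
    push_cast [Nat.cast_sub hle, hc1]
    have hc2 : ((n - 1 - 1 : ℕ) : ℤ) = (n : ℤ) - 2 := by
      have : n - 1 - 1 = n - 2 := by omega
      rw [this, Nat.cast_sub (by omega)]; norm_num
    rw [hc2]
    ring
end
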